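/- arXiv:1501.00378 — 2 statements merged into one kernel-verified Lean document; each statement's English description precedes it below -/
import Mathlib

section
/- Let f be a binary string and suppose Q_d(f) is not an isometric subgraph of Q_d. Then for every d' > d, Q_{d'}(f) is not an isometric subgraph of Q_{d'}. -/
/-- `occursAt u f k` : the string `f` occurs in `u` starting at (0-based)
position `k`. -/
def occursAt {d m : ℕ} (u : Fin d → Bool) (f : Fin m → Bool) (k : ℕ) : Prop :=
  ∃ _h : k + m ≤ d, ∀ i : Fin m, u ⟨k + i.1, by have := i.2; omega⟩ = f i

/-- `hasFactor u f` : `f` appears as a factor (consecutive bits) of `u`. -/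
def hasFactor {d m : ℕ} (u : Fin d → Bool) (f : Fin m → Bool) : Prop :=
  ∃ k, occursAt u f k

/-- The `d`-dimensional hypercube `Q_d` on binary strings of length `d`. -/
def Qcube (d : ℕ) : SimpleGraph (Fin d → Bool) where
  Adj α β := hammingDist α β = 1
  symm := by constructor; intro a b h; rwa [hammingDist_comm]
  loopless := by constructor; intro a h; rw [hammingDist_self] at h; omega

/-- The generalized Fibonacci cube `Q_d(f)`: the subgraph of `Q_d` induced on
the strings avoiding `f` as a factor. -/
def Qgraph (d : ℕ) {m : ℕ} (f : Fin m → Bool) :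
    SimpleGraph {u : Fin d → Bool // ¬ hasFactor u f} where
  Adj a b := hammingDist a.1 b.1 = 1
  symm := by constructor; intro a b h; rwa [hammingDist_comm]
  loopless := by constructor; intro a h; rw [hammingDist_self] at h; omega

/-- `Q_d(f)` is an isometric subgraph of `Q_d`: internal distances equal
Hamming distances. -/
def IsIsometric (d : ℕ) {m : ℕ} (f : Fin m → Bool) : Prop :=
  ∀ a b : {u : Fin d → Bool // ¬ hasFactor u f},
    (Qgraph d f).dist a b = hammingDist a.1 b.1

/-- `f` is good: `Q_d(f)` is isometric in `Q_d` for all `d ≥ 1`. -/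
def Good {m : ℕ} (f : Fin m → Bool) : Prop := ∀ d, 1 ≤ d → IsIsometric d f

/-- `f` is bad: `Q_d(f)` is not isometric in `Q_d` for some `d ≥ 1`. -/
def Bad {m : ℕ} (f : Fin m → Bool) : Prop := ∃ d, 1 ≤ d ∧ ¬ IsIsometric d f

/-- The index `B(f)`: the smallest `d` with `Q_d(f)` not isometric in `Q_d`. -/
noncomputable def Bindex {m : ℕ} (f : Fin m → Bool) : ℕ :=
  sInf {d | ¬ IsIsometric d f}

/-- Flip the `i`-th bit of `α`. -/
def flipBit {d : ℕ} (α : Fin d → Bool) (i : Fin d) : Fin d → Bool :=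
  Function.update α i (!(α i))

/-- `α, β` are `p`-critical words for `Q_d(f)`. -/
def pCritical (d : ℕ) {m : ℕ} (f : Fin m → Bool) (p : ℕ)
    (α β : Fin d → Bool) : Prop :=
  ¬ hasFactor α f ∧ ¬ hasFactor β f ∧ hammingDist α β = p ∧ 2 ≤ p ∧
    ((∀ i, α i ≠ β i → hasFactor (flipBit α i) f) ∨
     (∀ i, α i ≠ β i → hasFactor (flipBit β i) f))


section Aux

open SimpleGraph Finset

variable {d m : ℕ} {f : Fin m → Bool}

/-- Restriction to the first `d` coordinates. -/
def res {d : ℕ} (u : Fin (d+1) → Bool) : Fin d → Bool := fun i => u i.castSucc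

/-- Extension by one safe bit. -/
def extW {d m : ℕ} (f : Fin m → Bool) (hm : 1 ≤ m) (u : Fin d → Bool) :
    Fin (d+1) → Bool :=
  fun i => if h : i.1 < d then u ⟨i.1, h⟩ else !f ⟨m-1, by omega⟩

lemma ham_eq_sum {n : ℕ} (x y : Fin n → Bool) :
    hammingDist x y = ∑ i, (if x i ≠ y i then 1 else 0) := by
  classical
  simp [hammingDist, Finset.card_filter]

lemma ham_res {d : ℕ} {u v : Fin (d+1) → Bool}
    (h : u (Fin.last d) = v (Fin.last d)) :
    hammingDist (res u) (res v) = hammingDist u v := by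
  classical
  rw [ham_eq_sum, ham_eq_sum, Fin.sum_univ_castSucc]
  simp [res, h]
  exact Finset.sum_congr rfl (fun i _ => by split_ifs <;> simp_all)

lemma ham_strict {n : ℕ} (x p y : Fin n → Bool) (j : Fin n)
    (h1 : x j = y j) (h2 : x j ≠ p j) :
    hammingDist x y < hammingDist x p + hammingDist p y := by
  classical
  rw [ham_eq_sum, ham_eq_sum, ham_eq_sum, ← Finset.sum_add_distrib]
  apply Finset.sum_lt_sum
  · intro i _
    cases hx : x i <;> cases hp : p i <;> cases hy : y i <;> simp [hx, hp, hy]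
  · refine ⟨j, Finset.mem_univ j, ?_⟩
    have hpy : p j ≠ y j := fun hh => h2 (h1.trans hh.symm)
    simp [h1, h2, hpy]

lemma res_avoid {u : Fin (d+1) → Bool} (hu : ¬ hasFactor u f) :
    ¬ hasFactor (res u) f := by
  rintro ⟨k, hk, hocc⟩
  refine hu ⟨k, by omega, fun i => ?_⟩
  have := hocc i
  simpa [res, Fin.castSucc, Fin.castAdd, Fin.castLE] using this

lemma res_extW (hm : 1 ≤ m) (u : Fin d → Bool) : res (extW f hm u) = u := by
  funext i
  simp [res, extW, i.2]

lemma extW_last (hm : 1 ≤ m) (u : Fin d → Bool) :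
    extW f hm u (Fin.last d) = !f ⟨m-1, by omega⟩ := by
  simp [extW]

lemma extW_avoid (hm : 1 ≤ m) {u : Fin d → Bool} (hu : ¬ hasFactor u f) :
    ¬ hasFactor (extW f hm u) f := by
  rintro ⟨k, hk, hocc⟩
  by_cases hkd : k + m ≤ d
  · refine hu ⟨k, hkd, fun i => ?_⟩
    have := hocc i
    have hlt : k + i.1 < d := by have := i.2; omega
    simpa [extW, hlt] using this
  · have hthis := hocc ⟨m-1, by omega⟩
    simp only [extW] at hthis
    rw [dif_neg (by simp; omega)] at hthis
    simp at hthis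

lemma ham_ext (hm : 1 ≤ m) (u v : Fin d → Bool) :
    hammingDist (extW f hm u) (extW f hm v) = hammingDist u v := by
  have h : extW f hm u (Fin.last d) = extW f hm v (Fin.last d) := by
    rw [extW_last, extW_last]
  rw [← ham_res h, res_extW, res_extW]

lemma ham_le_length {n : ℕ} {x y : {u : Fin n → Bool // ¬ hasFactor u f}}
    (W : (Qgraph n f).Walk x y) : hammingDist x.1 y.1 ≤ W.length := by
  induction W with
  | nil => simp
  | @cons a p b h W ih =>
    have h1 : hammingDist a.1 p.1 = 1 := h
    calc hammingDist a.1 b.1 ≤ hammingDist a.1 p.1 + hammingDist p.1 b.1 :=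
          hammingDist_triangle _ _ _
      _ ≤ 1 + W.length := by omega
      _ = (SimpleGraph.Walk.cons h W).length := by
          rw [SimpleGraph.Walk.length_cons]; omega

lemma walk_restrict (c : Bool) :
    ∀ (x y : {u : Fin (d+1) → Bool // ¬ hasFactor u f})
      (W : (Qgraph (d+1) f).Walk x y),
      W.length = hammingDist x.1 y.1 →
      x.1 (Fin.last d) = c → y.1 (Fin.last d) = c →
      ∃ W' : (Qgraph d f).Walk ⟨res x.1, res_avoid x.2⟩ ⟨res y.1, res_avoid y.2⟩,
        W'.length = W.length := by
  intro x y W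
  induction W with
  | nil => intro _ _ _; exact ⟨SimpleGraph.Walk.nil, rfl⟩
  | @cons a p b h W ih =>
    intro hlen hx hy
    have h1 : hammingDist a.1 p.1 = 1 := h
    rw [SimpleGraph.Walk.length_cons] at hlen
    have hple : hammingDist p.1 b.1 ≤ W.length := ham_le_length W
    have hplast : p.1 (Fin.last d) = c := by
      by_contra hpc
      have hne : a.1 (Fin.last d) ≠ p.1 (Fin.last d) := by
        rw [hx]; exact fun hh => hpc hh.symm
      have := ham_strict a.1 p.1 b.1 (Fin.last d) (hx.trans hy.symm) hne
      omega
    have htri := hammingDist_triangle a.1 p.1 b.1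
    have hlen' : W.length = hammingDist p.1 b.1 := by omega
    obtain ⟨W', hW'⟩ := ih hlen' hplast hy
    have hadj : (Qgraph d f).Adj ⟨res a.1, res_avoid a.2⟩ ⟨res p.1, res_avoid p.2⟩ := by
      show hammingDist (res a.1) (res p.1) = 1
      rw [ham_res (hx.trans hplast.symm)]; exact h1
    exact ⟨SimpleGraph.Walk.cons hadj W', by
      rw [SimpleGraph.Walk.length_cons, SimpleGraph.Walk.length_cons, hW']⟩

lemma iso_step (hm : 1 ≤ m) (H : IsIsometric (d+1) f) : IsIsometric d f := by
  classical
  intro a b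
  by_cases hab : a = b
  · subst hab
    simp [SimpleGraph.dist_self, hammingDist_self]
  · have hne : a.1 ≠ b.1 := fun hh => hab (Subtype.ext hh)
    have hA : ¬ hasFactor (extW f hm a.1) f := extW_avoid hm a.2
    have hB : ¬ hasFactor (extW f hm b.1) f := extW_avoid hm b.2
    have hdist := H ⟨extW f hm a.1, hA⟩ ⟨extW f hm b.1, hB⟩
    have hhe : hammingDist (extW f hm a.1) (extW f hm b.1) = hammingDist a.1 b.1 :=
      ham_ext hm a.1 b.1
    simp only at hdist
    rw [hhe] at hdist
    have hpos : 0 < hammingDist a.1 b.1 := by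
      rcases Nat.eq_zero_or_pos (hammingDist a.1 b.1) with h0 | h0
      · exact absurd (hammingDist_eq_zero.mp h0) hne
      · exact h0
    have hreach : (Qgraph (d+1) f).Reachable ⟨extW f hm a.1, hA⟩ ⟨extW f hm b.1, hB⟩ := by
      by_contra hr
      rw [SimpleGraph.dist_eq_zero_of_not_reachable hr] at hdist
      omega
    obtain ⟨W, hW⟩ := hreach.exists_walk_length_eq_dist
    have hWlen : W.length =
        hammingDist (⟨extW f hm a.1, hA⟩ : {u : Fin (d+1) → Bool // ¬ hasFactor u f}).1
          (⟨extW f hm b.1, hB⟩ : {u : Fin (d+1) → Bool // ¬ hasFactor u f}).1 := by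
      show W.length = hammingDist (extW f hm a.1) (extW f hm b.1)
      omega
    obtain ⟨W', hW'⟩ := walk_restrict (!f ⟨m-1, by omega⟩) ⟨extW f hm a.1, hA⟩
      ⟨extW f hm b.1, hB⟩ W hWlen (extW_last hm a.1) (extW_last hm b.1)
    have hWlen' : W'.length = hammingDist a.1 b.1 := by
      rw [hW']; omega
    have hea : (⟨res (extW f hm a.1), res_avoid hA⟩ :
        {u : Fin d → Bool // ¬ hasFactor u f}) = a := Subtype.ext (res_extW hm a.1)
    have heb : (⟨res (extW f hm b.1), res_avoid hB⟩ :
        {u : Fin d → Bool // ¬ hasFactor u f}) = b := Subtype.ext (res_extW hm b.1)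
    have hW2 : (W'.copy hea heb).length = hammingDist a.1 b.1 := by
      rw [SimpleGraph.Walk.length_copy]; exact hWlen'
    have hub : (Qgraph d f).dist a b ≤ hammingDist a.1 b.1 := by
      rw [← hW2]; exact SimpleGraph.dist_le (W'.copy hea heb)
    have hreach2 : (Qgraph d f).Reachable a b := ⟨W'.copy hea heb⟩
    obtain ⟨V, hV⟩ := hreach2.exists_walk_length_eq_dist
    have hlb : hammingDist a.1 b.1 ≤ (Qgraph d f).dist a b := by
      rw [← hV]; exact ham_le_length V
    omega

end Aux

/-- Lemma 2.2: if `Q_d(f)` is not isometric in `Q_d`, then `Q_{d'}(f)` is not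
isometric in `Q_{d'}` for all `d' > d`. -/

theorem stmt_6 (m d : ℕ) (f : Fin m → Bool) (h : ¬ IsIsometric d f) :
    ∀ d', d < d' → ¬ IsIsometric d' f := by
  rcases Nat.eq_zero_or_pos m with hm | hm
  · exfalso
    apply h
    intro a _
    exact absurd (⟨0, by omega, fun i => by subst hm; exact i.elim0⟩ : hasFactor a.1 f) a.2
  · intro d' hd'
    induction d', hd' using Nat.le_induction with
    | base => exact fun H => h (iso_step hm H)
    | succ n _ ihn => exact fun H => ihn (iso_step hm H)
end

section
/- Let f be a nonempty binary string and suppose α, β are 2-critical words for Q_d(f) with d = B(f), differing in coordinates i_1 < i_2, with f-occurrences in α + e_{i_1} and α + e_{i_2} starting at positions u_{i_1} and u_{i_2} respectively. Then i_1 ∈ [u_{i_2}, u_{i_2} + |f| - 1] and i_2 ∈ [u_{i_1}, u_{i_1} + |f| - 1]. -/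
/-- For `2`-critical words `α, β` for `Q_{B(f)}(f)` differing in coordinates
`i₁ < i₂`, with `f`-occurrences in `α + e_{i₁}`, `α + e_{i₂}` starting at
`u₁, u₂` respectively, each flipped coordinate lies inside the occurrence of
`f` created by the other flip. -/
theorem stmt_16 (m : ℕ) (hm : 0 < m) (f : Fin m → Bool) (hBad : Bad f)
    (d : ℕ) (hd : d = Bindex f) (α β : Fin d → Bool)
    (hα : ¬ hasFactor α f) (hβ : ¬ hasFactor β f)
    (hH : hammingDist α β = 2)
    (i₁ i₂ : Fin d) (h12 : i₁.1 < i₂.1)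
    (h1 : α i₁ ≠ β i₁) (h2 : α i₂ ≠ β i₂)
    (u₁ u₂ : ℕ)
    (hu₁ : occursAt (flipBit α i₁) f u₁)
    (hu₂ : occursAt (flipBit α i₂) f u₂) :
    (u₂ ≤ i₁.1 ∧ i₁.1 < u₂ + m) ∧ (u₁ ≤ i₂.1 ∧ i₂.1 < u₁ + m) := by

  classical
  -- differing coordinates are exactly i₁ and i₂
  have hne : i₁ ≠ i₂ := fun h => by simp [h] at h12
  have hdiff : ∀ j, α j ≠ β j → j = i₁ ∨ j = i₂ := by
    intro j hj
    by_contra hcon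
    push_neg at hcon
    have hsub : ({i₁, i₂, j} : Finset (Fin d)) ⊆ Finset.filter (fun i => α i ≠ β i) Finset.univ := by
      intro x hx
      simp only [Finset.mem_insert, Finset.mem_singleton] at hx
      rcases hx with rfl | rfl | rfl <;> simp [h1, h2, hj]
    have hcard : ({i₁, i₂, j} : Finset (Fin d)).card = 3 := by
      rw [Finset.card_insert_of_notMem (by simp [hne, Ne.symm hcon.1]),
          Finset.card_insert_of_notMem (by simpa using Ne.symm hcon.2)]
      simp
    have := Finset.card_le_card hsub
    rw [hcard] at this
    have : hammingDist α β ≥ 3 := this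
    omega
  have hβ1 : β i₁ = !(α i₁) := by
    cases hb : β i₁ <;> cases ha : α i₁ <;> simp_all
  have hβ2 : β i₂ = !(α i₂) := by
    cases hb : β i₂ <;> cases ha : α i₂ <;> simp_all
  obtain ⟨hle₁, hocc₁⟩ := hu₁
  obtain ⟨hle₂, hocc₂⟩ := hu₂
  constructor
  · by_contra hcon
    push_neg at hcon
    apply hβ
    refine ⟨u₂, hle₂, fun i => ?_⟩
    have hi : u₂ + i.1 ≠ i₁.1 := by
      have := i.2
      rcases Nat.lt_or_ge i₁.1 u₂ with h | h
      · omega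
      · have := hcon h; omega
    have := hocc₂ i
    by_cases hi2 : u₂ + i.1 = i₂.1
    · have : (⟨u₂ + i.1, by have := i.2; omega⟩ : Fin d) = i₂ := Fin.ext hi2
      rw [this] at *
      rw [hβ2]
      have h2' := hocc₂ i
      rw [show (⟨u₂ + i.1, by have := i.2; omega⟩ : Fin d) = i₂ from Fin.ext hi2] at h2'
      rw [← h2']
      simp [flipBit, Function.update_self]
    · have hne1 : (⟨u₂ + i.1, by have := i.2; omega⟩ : Fin d) ≠ i₁ := fun h => hi (congrArg Fin.val h)
      have hne2 : (⟨u₂ + i.1, by have := i.2; omega⟩ : Fin d) ≠ i₂ := fun h => hi2 (congrArg Fin.val h)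
      have hab : α ⟨u₂ + i.1, by have := i.2; omega⟩ = β ⟨u₂ + i.1, by have := i.2; omega⟩ := by
        by_contra h
        rcases hdiff _ h with h' | h' <;> [exact hne1 h'; exact hne2 h']
      have h2' := hocc₂ i
      rw [← h2', ← hab]
      simp [flipBit, Function.update_of_ne hne2]
  · by_contra hcon
    push_neg at hcon
    apply hβ
    refine ⟨u₁, hle₁, fun i => ?_⟩
    have hi : u₁ + i.1 ≠ i₂.1 := by
      have := i.2
      rcases Nat.lt_or_ge i₂.1 u₁ with h | h
      · omega
      · have := hcon h; omega
    by_cases hi1 : u₁ + i.1 = i₁.1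
    · rw [show (⟨u₁ + i.1, by have := i.2; omega⟩ : Fin d) = i₁ from Fin.ext hi1]
      rw [hβ1]
      have h1' := hocc₁ i
      rw [show (⟨u₁ + i.1, by have := i.2; omega⟩ : Fin d) = i₁ from Fin.ext hi1] at h1'
      rw [← h1']
      simp [flipBit, Function.update_self]
    · have hne1 : (⟨u₁ + i.1, by have := i.2; omega⟩ : Fin d) ≠ i₁ := fun h => hi1 (congrArg Fin.val h)
      have hne2 : (⟨u₁ + i.1, by have := i.2; omega⟩ : Fin d) ≠ i₂ := fun h => hi (congrArg Fin.val h)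
      have hab : α ⟨u₁ + i.1, by have := i.2; omega⟩ = β ⟨u₁ + i.1, by have := i.2; omega⟩ := by
        by_contra h
        rcases hdiff _ h with h' | h' <;> [exact hne1 h'; exact hne2 h']
      have h1' := hocc₁ i
      rw [← h1', ← hab]
      simp [flipBit, Function.update_of_ne hne1]
end
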